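/- arXiv:1603.08964 — 3 statements merged into one kernel-verified Lean document; each statement's English description precedes it below -/
import Mathlib

section
/- For every t ∈ (0,1), one has t·(1 − log t) > sin((π/2)·t). -/
/-- Lemma 7: for every t ∈ (0,1), t(1 − log t) > sin((π/2)t). -/
theorem stmt5 (t : ℝ) (ht : t ∈ Set.Ioo (0:ℝ) 1) :
    t * (1 - Real.log t) > Real.sin (Real.pi / 2 * t) := by
  obtain ⟨ht0, ht1⟩ := ht
  have hpi : Real.pi < 3.15 := Real.pi_lt_d2
  have hpi3 : 3.14 < Real.pi := Real.pi_gt_d2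
  rcases le_or_gt t (1/2) with h | h
  · -- small t case
    have hsin : Real.sin (Real.pi / 2 * t) < Real.pi / 2 * t :=
      Real.sin_lt (by positivity)
    have hlog : Real.log t ≤ Real.log (1/2) := Real.log_le_log ht0 h
    have h2 : Real.log (1/2) = -Real.log 2 := by
      rw [one_div, Real.log_inv]
    have hl2 : (0.6931471803 : ℝ) < Real.log 2 := Real.log_two_gt_d9
    have : Real.pi / 2 * t ≤ t * (1 - Real.log t) := by
      rw [mul_comm]
      apply mul_le_mul_of_nonneg_left _ ht0.le
      nlinarith
    linarith
  · -- t near 1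
    have hne : t ≠ 1 := ne_of_lt ht1
    have hlog : Real.log t < t - 1 := Real.log_lt_sub_one_of_pos ht0 hne
    set s := 1 - t with hs
    have hs0 : 0 < s := by simp [hs]; linarith
    have hs2 : s < 1/2 := by simp [hs]; linarith
    -- rewrite sin as cos
    have hsin : Real.sin (Real.pi / 2 * t) = Real.cos (Real.pi / 2 * s) := by
      rw [hs, ← Real.cos_pi_div_two_sub]
      ring_nf
    have habs : |Real.pi / 2 * s| ≤ 1 := by
      rw [abs_of_nonneg (by positivity)]
      nlinarith
    have hcos := Real.cos_bound habs
    rw [abs_of_nonneg (by positivity : (0:ℝ) ≤ Real.pi / 2 * s)] at hcos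
    have hcos' : Real.cos (Real.pi / 2 * s) ≤
        1 - (Real.pi / 2 * s) ^ 2 / 2 + (Real.pi / 2 * s) ^ 4 * (5/96) := by
      have := abs_le.mp hcos
      linarith [this.2]
    rw [hsin]
    have key : 1 - (Real.pi / 2 * s) ^ 2 / 2 + (Real.pi / 2 * s) ^ 4 * (5/96)
        < t * (1 - Real.log t) := by
      have hlb : t * (2 - t) < t * (1 - Real.log t) := by
        apply mul_lt_mul_of_pos_left _ ht0
        linarith
      have ht2 : t * (2 - t) = 1 - s ^ 2 := by rw [hs]; ring
      have hp2 : Real.pi ^ 2 < 9.9225 := by nlinarith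
      have hp2' : (9.8596 : ℝ) < Real.pi ^ 2 := by nlinarith
      have hp4 : Real.pi ^ 4 < 98.46 := by nlinarith
      have hss : s ^ 2 < 1/4 := by nlinarith
      have hs4 : s ^ 2 * s ^ 2 ≤ s ^ 2 * (1/4) :=
        mul_le_mul_of_nonneg_left hss.le (sq_nonneg s)
      have hmain : 1 - (Real.pi / 2 * s) ^ 2 / 2 + (Real.pi / 2 * s) ^ 4 * (5/96)
          ≤ 1 - s ^ 2 := by
        nlinarith [sq_nonneg s, mul_nonneg (sq_nonneg s) (sq_nonneg s),
          mul_le_mul_of_nonneg_right hp4.le (sq_nonneg s)]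
      linarith
    linarith
end

section
/- For any probability space (Ω, F, P) and any sub-σ-fields A and B of F, one has ρ(A, B) ≤ ψ(A, B). -/
open MeasureTheory ProbabilityTheory
open scoped ENNReal

noncomputable def eventCorr {Ω : Type*} {_mΩ : MeasurableSpace Ω} (P : Measure Ω)
    (A B : Set Ω) : ℝ :=
  ((P (A ∩ B)).toReal - (P A).toReal * (P B).toReal) /
    Real.sqrt ((P A).toReal * (1 - (P A).toReal) * (P B).toReal * (1 - (P B).toReal))

noncomputable def tauDep {Ω : Type*} {_mΩ : MeasurableSpace Ω} (P : Measure Ω)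
    (𝒜 ℬ : MeasurableSpace Ω) : ℝ :=
  sSup {r : ℝ | ∃ A B : Set Ω, MeasurableSet[𝒜] A ∧ MeasurableSet[ℬ] B ∧ r = |eventCorr P A B|}

noncomputable def lambdaDep {Ω : Type*} {_mΩ : MeasurableSpace Ω} (P : Measure Ω)
    (𝒜 ℬ : MeasurableSpace Ω) : ℝ :=
  sSup {r : ℝ | ∃ A B : Set Ω, MeasurableSet[𝒜] A ∧ MeasurableSet[ℬ] B ∧
    r = |(P (A ∩ B)).toReal - (P A).toReal * (P B).toReal| /
      Real.sqrt ((P A).toReal * (P B).toReal)}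

noncomputable def psiDep {Ω : Type*} {_mΩ : MeasurableSpace Ω} (P : Measure Ω)
    (𝒜 ℬ : MeasurableSpace Ω) : ℝ≥0∞ :=
  ⨆ (A : Set Ω) (_ : MeasurableSet[𝒜] A) (B : Set Ω) (_ : MeasurableSet[ℬ] B),
    ENNReal.ofReal (|(P (A ∩ B)).toReal - (P A).toReal * (P B).toReal| /
      ((P A).toReal * (P B).toReal))

noncomputable def corrRV {Ω : Type*} {_mΩ : MeasurableSpace Ω} (P : Measure Ω)
    (X Y : Ω → ℝ) : ℝ :=
  (∫ ω, X ω * Y ω ∂P - (∫ ω, X ω ∂P) * (∫ ω, Y ω ∂P)) /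
    Real.sqrt ((∫ ω, X ω ^ 2 ∂P - (∫ ω, X ω ∂P) ^ 2) *
      (∫ ω, Y ω ^ 2 ∂P - (∫ ω, Y ω ∂P) ^ 2))

noncomputable def rhoDep {Ω : Type*} {_mΩ : MeasurableSpace Ω} (P : Measure Ω)
    (𝒜 ℬ : MeasurableSpace Ω) : ℝ :=
  sSup {r : ℝ | ∃ X Y : Ω → ℝ, Measurable[𝒜] X ∧ Measurable[ℬ] Y ∧
    MemLp X 2 P ∧ MemLp Y 2 P ∧ r = |corrRV P X Y|}


section Helpers
open Filter Set
set_option linter.unusedSectionVars false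
set_option linter.unusedVariables false
set_option linter.unnecessarySimpa false

theorem indicator_bound {Ω : Type*} {mΩ : MeasurableSpace Ω} (P : Measure Ω)
    [IsProbabilityMeasure P] (𝒜 ℬ : MeasurableSpace Ω)
    (hψ : psiDep P 𝒜 ℬ ≠ ⊤) {A B : Set Ω}
    (hA : MeasurableSet[𝒜] A) (hB : MeasurableSet[ℬ] B) :
    |(P (A ∩ B)).toReal - (P A).toReal * (P B).toReal| ≤
      (psiDep P 𝒜 ℬ).toReal * ((P A).toReal * (P B).toReal) := by
  have hle : ENNReal.ofReal (|(P (A ∩ B)).toReal - (P A).toReal * (P B).toReal| /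
      ((P A).toReal * (P B).toReal)) ≤ psiDep P 𝒜 ℬ := by
    calc _ ≤ ⨆ (B : Set Ω) (_ : MeasurableSet[ℬ] B),
        ENNReal.ofReal (|(P (A ∩ B)).toReal - (P A).toReal * (P B).toReal| /
          ((P A).toReal * (P B).toReal)) := le_iSup₂ (f := fun B (_ : MeasurableSet[ℬ] B) =>
            ENNReal.ofReal (|(P (A ∩ B)).toReal - (P A).toReal * (P B).toReal| /
              ((P A).toReal * (P B).toReal))) B hB
      _ ≤ psiDep P 𝒜 ℬ := le_iSup₂ (f := fun A (_ : MeasurableSet[𝒜] A) =>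
          ⨆ (B : Set Ω) (_ : MeasurableSet[ℬ] B),
            ENNReal.ofReal (|(P (A ∩ B)).toReal - (P A).toReal * (P B).toReal| /
              ((P A).toReal * (P B).toReal))) A hA
  rcases eq_or_ne ((P A).toReal * (P B).toReal) 0 with h0 | h0
  · have hPAB : (P (A ∩ B)).toReal = 0 := by
      rcases mul_eq_zero.1 h0 with h | h
      · have : P A ≠ ⊤ := measure_ne_top _ _
        have hA0 : P A = 0 := by
          simpa [ENNReal.toReal_eq_zero_iff, this] using h
        have : P (A ∩ B) = 0 := measure_mono_null Set.inter_subset_left hA0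
        simp [this]
      · have : P B ≠ ⊤ := measure_ne_top _ _
        have hB0 : P B = 0 := by
          simpa [ENNReal.toReal_eq_zero_iff, this] using h
        have : P (A ∩ B) = 0 := measure_mono_null Set.inter_subset_right hB0
        simp [this]
    rw [h0, hPAB]
    simp
  · have hpos : 0 < (P A).toReal * (P B).toReal :=
      lt_of_le_of_ne (by positivity) (Ne.symm h0)
    have : |(P (A ∩ B)).toReal - (P A).toReal * (P B).toReal| /
        ((P A).toReal * (P B).toReal) ≤ (psiDep P 𝒜 ℬ).toReal := by
      rw [← ENNReal.ofReal_le_iff_le_toReal hψ] at *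
      exact hle
    calc |(P (A ∩ B)).toReal - (P A).toReal * (P B).toReal|
        = |(P (A ∩ B)).toReal - (P A).toReal * (P B).toReal| /
            ((P A).toReal * (P B).toReal) * ((P A).toReal * (P B).toReal) := by
          rw [div_mul_cancel₀ _ h0]
      _ ≤ _ := by
          exact mul_le_mul_of_nonneg_right this hpos.le

theorem bdd_integrable {Ω : Type*} {mΩ : MeasurableSpace Ω} (P : Measure Ω)
    [IsProbabilityMeasure P] {f : Ω → ℝ} (hm : Measurable f) (C : ℝ) (hC : ∀ x, |f x| ≤ C) :
    Integrable f P := by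
  rw [← memLp_one_iff_integrable]
  exact (memLp_top_of_bound hm.aestronglyMeasurable C (ae_of_all _ hC)).mono_exponent
    le_top

theorem sf_meas {Ω : Type*} {mΩ : MeasurableSpace Ω} {𝒜 : MeasurableSpace Ω} (h𝒜 : 𝒜 ≤ mΩ)
    (f : @SimpleFunc Ω 𝒜 ℝ) : Measurable[mΩ] (f : Ω → ℝ) :=
  (@SimpleFunc.measurable Ω ℝ 𝒜 _ f).mono h𝒜 le_rfl

theorem sf_integrable {Ω : Type*} {mΩ : MeasurableSpace Ω} (P : Measure Ω)
    [IsProbabilityMeasure P] {𝒜 : MeasurableSpace Ω} (h𝒜 : 𝒜 ≤ mΩ) (f : @SimpleFunc Ω 𝒜 ℝ) :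
    Integrable (f : Ω → ℝ) P := by
  obtain ⟨C, hC⟩ := f.exists_forall_norm_le
  exact bdd_integrable P (sf_meas h𝒜 f) C hC

theorem sf_mul_integrable {Ω : Type*} {mΩ : MeasurableSpace Ω} (P : Measure Ω)
    [IsProbabilityMeasure P] {𝒜 ℬ : MeasurableSpace Ω} (h𝒜 : 𝒜 ≤ mΩ) (hℬ : ℬ ≤ mΩ)
    (f : @SimpleFunc Ω 𝒜 ℝ) (g : @SimpleFunc Ω ℬ ℝ) :
    Integrable (fun ω => f ω * g ω) P := by
  obtain ⟨C, hC⟩ := @MeasureTheory.SimpleFunc.exists_forall_norm_le Ω ℝ 𝒜 _ f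
  obtain ⟨D, hD⟩ := @MeasureTheory.SimpleFunc.exists_forall_norm_le Ω ℝ ℬ _ g
  refine bdd_integrable P ((sf_meas h𝒜 f).mul (sf_meas hℬ g)) (|C| * |D|) fun x => ?_
  rw [abs_mul]
  exact mul_le_mul ((hC x).trans (le_abs_self C)) ((hD x).trans (le_abs_self D))
    (abs_nonneg _) (abs_nonneg _)

theorem cov_add_aux {Ω : Type*} {mΩ : MeasurableSpace Ω} (P : Measure Ω)
    [IsProbabilityMeasure P] {u₁ u₂ v : Ω → ℝ} {ψ : ℝ}
    (hu₁ : Integrable u₁ P) (hu₂ : Integrable u₂ P)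
    (hu₁v : Integrable (fun ω => u₁ ω * v ω) P) (hu₂v : Integrable (fun ω => u₂ ω * v ω) P)
    (hdisj : ∀ ω, u₁ ω = 0 ∨ u₂ ω = 0)
    (h₁ : |(∫ ω, u₁ ω * v ω ∂P) - (∫ ω, u₁ ω ∂P) * ∫ ω, v ω ∂P| ≤
      ψ * ((∫ ω, |u₁ ω| ∂P) * ∫ ω, |v ω| ∂P))
    (h₂ : |(∫ ω, u₂ ω * v ω ∂P) - (∫ ω, u₂ ω ∂P) * ∫ ω, v ω ∂P| ≤
      ψ * ((∫ ω, |u₂ ω| ∂P) * ∫ ω, |v ω| ∂P)) :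
    |(∫ ω, (u₁ ω + u₂ ω) * v ω ∂P) - (∫ ω, (u₁ ω + u₂ ω) ∂P) * ∫ ω, v ω ∂P| ≤
      ψ * ((∫ ω, |u₁ ω + u₂ ω| ∂P) * ∫ ω, |v ω| ∂P) := by
  have e1 : (∫ ω, (u₁ ω + u₂ ω) * v ω ∂P)
      = (∫ ω, u₁ ω * v ω ∂P) + ∫ ω, u₂ ω * v ω ∂P := by
    rw [← integral_add hu₁v hu₂v]
    exact integral_congr_ae (ae_of_all _ fun ω => by ring)
  have e2 : (∫ ω, (u₁ ω + u₂ ω) ∂P) = (∫ ω, u₁ ω ∂P) + ∫ ω, u₂ ω ∂P :=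
    integral_add hu₁ hu₂
  have e3 : (∫ ω, |u₁ ω + u₂ ω| ∂P) = (∫ ω, |u₁ ω| ∂P) + ∫ ω, |u₂ ω| ∂P := by
    rw [← integral_add hu₁.abs hu₂.abs]
    refine integral_congr_ae (ae_of_all _ fun ω => ?_)
    rcases hdisj ω with h | h <;> simp [h]
  rw [e1, e2, e3]
  calc |(∫ ω, u₁ ω * v ω ∂P) + (∫ ω, u₂ ω * v ω ∂P)
        - ((∫ ω, u₁ ω ∂P) + ∫ ω, u₂ ω ∂P) * ∫ ω, v ω ∂P|
      ≤ |(∫ ω, u₁ ω * v ω ∂P) - (∫ ω, u₁ ω ∂P) * ∫ ω, v ω ∂P|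
        + |(∫ ω, u₂ ω * v ω ∂P) - (∫ ω, u₂ ω ∂P) * ∫ ω, v ω ∂P| := by
        have : (∫ ω, u₁ ω * v ω ∂P) + (∫ ω, u₂ ω * v ω ∂P)
            - ((∫ ω, u₁ ω ∂P) + ∫ ω, u₂ ω ∂P) * ∫ ω, v ω ∂P
            = ((∫ ω, u₁ ω * v ω ∂P) - (∫ ω, u₁ ω ∂P) * ∫ ω, v ω ∂P)
              + ((∫ ω, u₂ ω * v ω ∂P) - (∫ ω, u₂ ω ∂P) * ∫ ω, v ω ∂P) := by ring
        rw [this]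
        exact abs_add_le _ _
    _ ≤ ψ * ((∫ ω, |u₁ ω| ∂P) * ∫ ω, |v ω| ∂P) + ψ * ((∫ ω, |u₂ ω| ∂P) * ∫ ω, |v ω| ∂P) :=
        add_le_add h₁ h₂
    _ = ψ * (((∫ ω, |u₁ ω| ∂P) + ∫ ω, |u₂ ω| ∂P) * ∫ ω, |v ω| ∂P) := by ring

theorem cov_add_aux' {Ω : Type*} {mΩ : MeasurableSpace Ω} (P : Measure Ω)
    [IsProbabilityMeasure P] {u₁ u₂ v : Ω → ℝ} {ψ : ℝ}
    (hu₁ : Integrable u₁ P) (hu₂ : Integrable u₂ P)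
    (hu₁v : Integrable (fun ω => u₁ ω * v ω) P) (hu₂v : Integrable (fun ω => u₂ ω * v ω) P)
    (hdisj : ∀ ω, u₁ ω = 0 ∨ u₂ ω = 0)
    (h₁ : |(∫ ω, v ω * u₁ ω ∂P) - (∫ ω, v ω ∂P) * ∫ ω, u₁ ω ∂P| ≤
      ψ * ((∫ ω, |v ω| ∂P) * ∫ ω, |u₁ ω| ∂P))
    (h₂ : |(∫ ω, v ω * u₂ ω ∂P) - (∫ ω, v ω ∂P) * ∫ ω, u₂ ω ∂P| ≤
      ψ * ((∫ ω, |v ω| ∂P) * ∫ ω, |u₂ ω| ∂P)) :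
    |(∫ ω, v ω * (u₁ ω + u₂ ω) ∂P) - (∫ ω, v ω ∂P) * ∫ ω, (u₁ ω + u₂ ω) ∂P| ≤
      ψ * ((∫ ω, |v ω| ∂P) * ∫ ω, |u₁ ω + u₂ ω| ∂P) := by
  simp_rw [mul_comm (v _)] at h₁ h₂ ⊢
  rw [mul_comm (∫ ω, v ω ∂P), mul_comm (∫ ω, |v ω| ∂P)] at h₁ h₂ ⊢
  exact cov_add_aux P hu₁ hu₂ hu₁v hu₂v hdisj h₁ h₂

theorem disj_pt {Ω : Type*} {u₁ u₂ : Ω → ℝ}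
    (h : Disjoint (Function.support u₁) (Function.support u₂)) :
    ∀ ω, u₁ ω = 0 ∨ u₂ ω = 0 := by
  intro ω
  by_contra hc
  push_neg at hc
  exact Set.disjoint_left.mp h (Function.mem_support.2 hc.1) (Function.mem_support.2 hc.2)

theorem piecewise_coe {Ω : Type*} {m : MeasurableSpace Ω} {s : Set Ω}
    (hs : MeasurableSet[m] s) (c : ℝ) (ω : Ω) :
    (@MeasureTheory.SimpleFunc.piecewise Ω ℝ m s hs (@MeasureTheory.SimpleFunc.const Ω ℝ m c)
      (@MeasureTheory.SimpleFunc.const Ω ℝ m 0)) ω = s.indicator (fun _ => c) ω := by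
  by_cases h : ω ∈ s <;>
    simp [MeasureTheory.SimpleFunc.piecewise_apply, h, Set.indicator_apply]

theorem base_case {Ω : Type*} {mΩ : MeasurableSpace Ω} (P : Measure Ω) [IsProbabilityMeasure P]
    {s t : Set Ω} (hs : MeasurableSet s) (ht : MeasurableSet t) (c d ψ : ℝ)
    (key : |(P (s ∩ t)).toReal - (P s).toReal * (P t).toReal| ≤
      ψ * ((P s).toReal * (P t).toReal)) :
    |(∫ ω, s.indicator (fun _ => c) ω * t.indicator (fun _ => d) ω ∂P) -
        (∫ ω, s.indicator (fun _ => c) ω ∂P) * ∫ ω, t.indicator (fun _ => d) ω ∂P| ≤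
      ψ * ((∫ ω, |s.indicator (fun _ => c) ω| ∂P) * ∫ ω, |t.indicator (fun _ => d) ω| ∂P) := by
  have I1 : ∫ ω, s.indicator (fun _ => c) ω * t.indicator (fun _ => d) ω ∂P
      = (P (s ∩ t)).toReal * (c * d) := by
    have hpt : ∀ ω, s.indicator (fun _ => c) ω * t.indicator (fun _ => d) ω
        = (s ∩ t).indicator (fun _ => c * d) ω := by
      intro ω
      by_cases h1 : ω ∈ s <;> by_cases h2 : ω ∈ t <;>
        simp [Set.indicator_apply, h1, h2, Set.mem_inter_iff]
    rw [integral_congr_ae (ae_of_all _ hpt), integral_indicator_const _ (hs.inter ht)]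
    simp [smul_eq_mul, measureReal_def]
  have I2 : ∫ ω, s.indicator (fun _ => c) ω ∂P = (P s).toReal * c := by
    rw [integral_indicator_const _ hs]; simp [smul_eq_mul, measureReal_def]
  have I3 : ∫ ω, t.indicator (fun _ => d) ω ∂P = (P t).toReal * d := by
    rw [integral_indicator_const _ ht]; simp [smul_eq_mul, measureReal_def]
  have I4 : ∫ ω, |s.indicator (fun _ => c) ω| ∂P = (P s).toReal * |c| := by
    have : ∀ ω, |s.indicator (fun _ => c) ω| = s.indicator (fun _ => |c|) ω := by
      intro ω; by_cases h : ω ∈ s <;> simp [Set.indicator_apply, h]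
    rw [integral_congr_ae (ae_of_all _ this), integral_indicator_const _ hs]
    simp [smul_eq_mul, measureReal_def]
  have I5 : ∫ ω, |t.indicator (fun _ => d) ω| ∂P = (P t).toReal * |d| := by
    have : ∀ ω, |t.indicator (fun _ => d) ω| = t.indicator (fun _ => |d|) ω := by
      intro ω; by_cases h : ω ∈ t <;> simp [Set.indicator_apply, h]
    rw [integral_congr_ae (ae_of_all _ this), integral_indicator_const _ ht]
    simp [smul_eq_mul, measureReal_def]
  rw [I1, I2, I3, I4, I5]
  calc |(P (s ∩ t)).toReal * (c * d) - (P s).toReal * c * ((P t).toReal * d)|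
      = |c * d| * |(P (s ∩ t)).toReal - (P s).toReal * (P t).toReal| := by
        rw [← abs_mul]; ring_nf
    _ ≤ |c * d| * (ψ * ((P s).toReal * (P t).toReal)) :=
        mul_le_mul_of_nonneg_left key (abs_nonneg _)
    _ = ψ * ((P s).toReal * |c| * ((P t).toReal * |d|)) := by
        rw [abs_mul]; ring

theorem simple_cov {Ω : Type*} {mΩ : MeasurableSpace Ω} (P : Measure Ω)
    [IsProbabilityMeasure P] {𝒜 ℬ : MeasurableSpace Ω} (h𝒜 : 𝒜 ≤ mΩ) (hℬ : ℬ ≤ mΩ)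
    (hψ : psiDep P 𝒜 ℬ ≠ ⊤) (f : @SimpleFunc Ω 𝒜 ℝ) (g : @SimpleFunc Ω ℬ ℝ) :
    |(∫ ω, f ω * g ω ∂P) - (∫ ω, f ω ∂P) * ∫ ω, g ω ∂P| ≤
      (psiDep P 𝒜 ℬ).toReal * ((∫ ω, |f ω| ∂P) * ∫ ω, |g ω| ∂P) := by
  induction f using MeasureTheory.SimpleFunc.induction generalizing g with
  | const c hs =>
    rename_i s
    induction g using MeasureTheory.SimpleFunc.induction with
    | const d ht =>
      rename_i t
      simp only [piecewise_coe]
      exact base_case P (h𝒜 _ hs) (hℬ _ ht) c d _ (indicator_bound P 𝒜 ℬ hψ hs ht)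
    | add hdisj ih₁ ih₂ =>
      rename_i g₁ g₂
      simp only [MeasureTheory.SimpleFunc.coe_add, Pi.add_apply]
      exact cov_add_aux' P (sf_integrable P hℬ g₁) (sf_integrable P hℬ g₂)
        (sf_mul_integrable P hℬ h𝒜 g₁ _) (sf_mul_integrable P hℬ h𝒜 g₂ _)
        (disj_pt hdisj) ih₁ ih₂
  | add hdisj ih₁ ih₂ =>
    rename_i f₁ f₂
    simp only [MeasureTheory.SimpleFunc.coe_add, Pi.add_apply]
    exact cov_add_aux P (sf_integrable P h𝒜 f₁) (sf_integrable P h𝒜 f₂)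
      (sf_mul_integrable P h𝒜 hℬ f₁ g) (sf_mul_integrable P h𝒜 hℬ f₂ g)
      (disj_pt hdisj) (ih₁ g) (ih₂ g)

theorem integral_mul_eq_inner {Ω : Type*} {mΩ : MeasurableSpace Ω} (P : Measure Ω)
    [IsProbabilityMeasure P] (f g : Ω → ℝ) (hf : MemLp f 2 P) (hg : MemLp g 2 P) :
    ∫ ω, f ω * g ω ∂P = @inner ℝ _ _ (hf.toLp f) (hg.toLp g) := by
  rw [MeasureTheory.L2.inner_def]
  refine (integral_congr_ae ?_).symm
  filter_upwards [hf.coeFn_toLp, hg.coeFn_toLp] with ω h1 h2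
  simp [h1, h2, RCLike.inner_apply, mul_comm]

theorem toLp_tendsto {Ω : Type*} {mΩ : MeasurableSpace Ω} (P : Measure Ω)
    [IsProbabilityMeasure P] {f : ℕ → Ω → ℝ} {g : Ω → ℝ} (hf : ∀ n, MemLp (f n) 2 P)
    (hg : MemLp g 2 P)
    (h : Tendsto (fun n => eLpNorm (f n - g) 2 P) atTop (nhds 0)) :
    Tendsto (fun n => (hf n).toLp (f n)) atTop (nhds (hg.toLp g)) := by
  rw [tendsto_iff_dist_tendsto_zero]
  have hd : ∀ n, dist ((hf n).toLp (f n)) (hg.toLp g) = (eLpNorm (f n - g) 2 P).toReal := by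
    intro n
    rw [Lp.dist_def]
    congr 1
    apply eLpNorm_congr_ae
    filter_upwards [(hf n).coeFn_toLp, hg.coeFn_toLp] with ω h1 h2
    simp [h1, h2]
  simp_rw [hd]
  have := (ENNReal.tendsto_toReal (by simp : (0:ℝ≥0∞) ≠ ⊤)).comp h
  simpa [Function.comp_def] using this

theorem integral_mul_tendsto {Ω : Type*} {mΩ : MeasurableSpace Ω} (P : Measure Ω)
    [IsProbabilityMeasure P] {f : ℕ → Ω → ℝ} {F : Ω → ℝ} {g : ℕ → Ω → ℝ} {G : Ω → ℝ}
    (hf : ∀ n, MemLp (f n) 2 P) (hF : MemLp F 2 P)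
    (hg : ∀ n, MemLp (g n) 2 P) (hG : MemLp G 2 P)
    (h1 : Tendsto (fun n => eLpNorm (f n - F) 2 P) atTop (nhds 0))
    (h2 : Tendsto (fun n => eLpNorm (g n - G) 2 P) atTop (nhds 0)) :
    Tendsto (fun n => ∫ ω, f n ω * g n ω ∂P) atTop (nhds (∫ ω, F ω * G ω ∂P)) := by
  have e : ∀ n, ∫ ω, f n ω * g n ω ∂P = @inner ℝ _ _ ((hf n).toLp (f n)) ((hg n).toLp (g n)) :=
    fun n => integral_mul_eq_inner P _ _ _ _
  rw [integral_mul_eq_inner P F G hF hG]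
  simp_rw [e]
  exact (toLp_tendsto P hf hF h1).inner (toLp_tendsto P hg hG h2)

theorem integral_tendsto {Ω : Type*} {mΩ : MeasurableSpace Ω} (P : Measure Ω)
    [IsProbabilityMeasure P] {f : ℕ → Ω → ℝ} {F : Ω → ℝ}
    (hf : ∀ n, MemLp (f n) 2 P) (hF : MemLp F 2 P)
    (h1 : Tendsto (fun n => eLpNorm (f n - F) 2 P) atTop (nhds 0)) :
    Tendsto (fun n => ∫ ω, f n ω ∂P) atTop (nhds (∫ ω, F ω ∂P)) := by
  have := integral_mul_tendsto P hf hF (fun _ => memLp_const (1:ℝ)) (memLp_const (1:ℝ))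
    h1 (by simpa using tendsto_const_nhds)
  simpa using this

theorem integral_abs_tendsto {Ω : Type*} {mΩ : MeasurableSpace Ω} (P : Measure Ω)
    [IsProbabilityMeasure P] {f : ℕ → Ω → ℝ} {F : Ω → ℝ}
    (hf : ∀ n, MemLp (f n) 2 P) (hF : MemLp F 2 P)
    (h1 : Tendsto (fun n => eLpNorm (f n - F) 2 P) atTop (nhds 0)) :
    Tendsto (fun n => ∫ ω, |f n ω| ∂P) atTop (nhds (∫ ω, |F ω| ∂P)) := by
  refine integral_tendsto P (fun n => ?_) ?_ ?_
  · simpa using (hf n).norm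
  · simpa using hF.norm
  · refine tendsto_of_tendsto_of_tendsto_of_le_of_le tendsto_const_nhds h1
      (fun n => zero_le) fun n => ?_
    refine eLpNorm_mono fun x => ?_
    simp only [Pi.sub_apply, Real.norm_eq_abs]
    exact (abs_abs_sub_abs_le_abs_sub _ _).trans le_rfl

theorem sf_memℒp {Ω : Type*} {mΩ : MeasurableSpace Ω} (P : Measure Ω)
    [IsProbabilityMeasure P] {𝒜 : MeasurableSpace Ω} (h𝒜 : 𝒜 ≤ mΩ) (f : @SimpleFunc Ω 𝒜 ℝ) :
    MemLp (f : Ω → ℝ) 2 P := by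
  obtain ⟨C, hC⟩ := @MeasureTheory.SimpleFunc.exists_forall_norm_le Ω ℝ 𝒜 _ f
  have hm : Measurable[mΩ] (f : Ω → ℝ) := (@SimpleFunc.measurable Ω ℝ 𝒜 _ f).mono h𝒜 le_rfl
  exact (memLp_top_of_bound hm.aestronglyMeasurable C (ae_of_all _ hC)).mono_exponent
    le_top

-- existence of L² approximating sequence of 𝒜-simple functions

theorem approx_seq {Ω : Type*} {mΩ : MeasurableSpace Ω} (P : Measure Ω)
    [IsProbabilityMeasure P] {𝒜 : MeasurableSpace Ω} (h𝒜 : 𝒜 ≤ mΩ) {X : Ω → ℝ}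
    (hX : Measurable[𝒜] X) (hX2 : MemLp X 2 P) :
    ∃ f : ℕ → @SimpleFunc Ω 𝒜 ℝ,
      Tendsto (fun n => eLpNorm (X - (f n : Ω → ℝ)) 2 P) atTop (nhds 0) := by
  have hXsm : StronglyMeasurable[𝒜] X := hX.stronglyMeasurable
  have hXtrim : MemLp X 2 (P.trim h𝒜) :=
    ⟨hXsm.aestronglyMeasurable, by rw [eLpNorm_trim h𝒜 hXsm]; exact hX2.2⟩
  have hch : ∀ n : ℕ, ∃ f : @SimpleFunc Ω 𝒜 ℝ,
      eLpNorm (X - (f : Ω → ℝ)) 2 (P.trim h𝒜) < ((n : ℝ≥0∞) + 1)⁻¹ := by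
    intro n
    obtain ⟨g, hg, -⟩ := hXtrim.exists_simpleFunc_eLpNorm_sub_lt (by simp)
      (ε := ((n : ℝ≥0∞) + 1)⁻¹) (by simp)
    exact ⟨g, hg⟩
  choose f hf using hch
  refine ⟨f, ?_⟩
  have heq : ∀ n, eLpNorm (X - (f n : Ω → ℝ)) 2 P = eLpNorm (X - (f n : Ω → ℝ)) 2 (P.trim h𝒜) := by
    intro n
    rw [eLpNorm_trim h𝒜 (hXsm.sub (@SimpleFunc.stronglyMeasurable Ω ℝ 𝒜 _ (f n)))]
  simp_rw [heq]
  have hinv : Tendsto (fun n : ℕ => ((n : ℝ≥0∞) + 1)⁻¹) atTop (nhds 0) := by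
    have := ENNReal.tendsto_inv_nat_nhds_zero.comp (tendsto_add_atTop_nat 1)
    refine this.congr fun n => ?_
    simp [Function.comp]
  exact tendsto_of_tendsto_of_tendsto_of_le_of_le tendsto_const_nhds hinv
    (fun n => zero_le) fun n => (hf n).le

theorem cov_bound {Ω : Type*} {mΩ : MeasurableSpace Ω} (P : Measure Ω)
    [IsProbabilityMeasure P] {𝒜 ℬ : MeasurableSpace Ω} (h𝒜 : 𝒜 ≤ mΩ) (hℬ : ℬ ≤ mΩ)
    (hψ : psiDep P 𝒜 ℬ ≠ ⊤) {X Y : Ω → ℝ} (hX : Measurable[𝒜] X) (hY : Measurable[ℬ] Y)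
    (hX2 : MemLp X 2 P) (hY2 : MemLp Y 2 P) :
    |(∫ ω, X ω * Y ω ∂P) - (∫ ω, X ω ∂P) * ∫ ω, Y ω ∂P| ≤
      (psiDep P 𝒜 ℬ).toReal * ((∫ ω, |X ω| ∂P) * ∫ ω, |Y ω| ∂P) := by
  obtain ⟨f, hf⟩ := approx_seq P h𝒜 hX hX2
  obtain ⟨g, hg⟩ := approx_seq P hℬ hY hY2
  have hf' : ∀ n, MemLp (f n : Ω → ℝ) 2 P := fun n => sf_memℒp P h𝒜 (f n)
  have hg' : ∀ n, MemLp (g n : Ω → ℝ) 2 P := fun n => sf_memℒp P hℬ (g n)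
  have hf0 : Tendsto (fun n => eLpNorm ((f n : Ω → ℝ) - X) 2 P) atTop (nhds 0) := by
    refine hf.congr fun n => ?_
    rw [← eLpNorm_neg]; congr 1; ext ω; simp
  have hg0 : Tendsto (fun n => eLpNorm ((g n : Ω → ℝ) - Y) 2 P) atTop (nhds 0) := by
    refine hg.congr fun n => ?_
    rw [← eLpNorm_neg]; congr 1; ext ω; simp
  have t1 := integral_mul_tendsto P hf' hX2 hg' hY2 hf0 hg0
  have t2 := integral_tendsto P hf' hX2 hf0
  have t3 := integral_tendsto P hg' hY2 hg0
  have t4 := integral_abs_tendsto P hf' hX2 hf0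
  have t5 := integral_abs_tendsto P hg' hY2 hg0
  refine le_of_tendsto_of_tendsto' ((t1.sub (t2.mul t3)).abs)
    (tendsto_const_nhds.mul (t4.mul t5)) fun n => simple_cov P h𝒜 hℬ hψ (f n) (g n)

theorem norm_toLp_sq {Ω : Type*} {mΩ : MeasurableSpace Ω} (P : Measure Ω)
    [IsProbabilityMeasure P] (f : Ω → ℝ) (hf : MemLp f 2 P) :
    ‖hf.toLp f‖ ^ 2 = ∫ ω, f ω ^ 2 ∂P := by
  rw [← real_inner_self_eq_norm_sq, ← integral_mul_eq_inner P f f hf hf]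
  simp_rw [sq]

theorem abs_integral_le_sqrt {Ω : Type*} {mΩ : MeasurableSpace Ω} (P : Measure Ω)
    [IsProbabilityMeasure P] {Z : Ω → ℝ} (hZ : MemLp Z 2 P) :
    ∫ ω, |Z ω| ∂P ≤ Real.sqrt (∫ ω, Z ω ^ 2 ∂P) := by
  have hZa : MemLp (fun ω => |Z ω|) 2 P := by simpa using hZ.norm
  have h1 : MemLp (fun _ : Ω => (1:ℝ)) 2 P := memLp_const 1
  have e1 : ∫ ω, |Z ω| ∂P = @inner ℝ _ _ (hZa.toLp _) (h1.toLp _) := by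
    rw [← integral_mul_eq_inner P _ _ hZa h1]
    simp
  have hn1 : ‖h1.toLp (fun _ : Ω => (1:ℝ))‖ = 1 := by
    have := norm_toLp_sq P (fun _ : Ω => (1:ℝ)) h1
    simp only [one_pow, integral_const, measure_univ, ENNReal.toReal_one, smul_eq_mul,
      one_mul, probReal_univ] at this
    nlinarith [norm_nonneg (h1.toLp (fun _ : Ω => (1:ℝ)))]
  have e2 : ‖hZa.toLp (fun ω => |Z ω|)‖ = Real.sqrt (∫ ω, Z ω ^ 2 ∂P) := by
    have h := norm_toLp_sq P _ hZa
    have : ∫ ω, |Z ω| ^ 2 ∂P = ∫ ω, Z ω ^ 2 ∂P := by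
      refine integral_congr_ae (ae_of_all _ fun ω => by simp [sq_abs])
    rw [this] at h
    rw [← h, Real.sqrt_sq (norm_nonneg _)]
  calc ∫ ω, |Z ω| ∂P = @inner ℝ _ _ (hZa.toLp _) (h1.toLp _) := e1
    _ ≤ ‖hZa.toLp (fun ω => |Z ω|)‖ * ‖h1.toLp (fun _ : Ω => (1:ℝ))‖ := real_inner_le_norm _ _
    _ = Real.sqrt (∫ ω, Z ω ^ 2 ∂P) := by rw [hn1, e2, mul_one]

theorem memℒp2_integrable_mul {Ω : Type*} {mΩ : MeasurableSpace Ω} (P : Measure Ω)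
    [IsProbabilityMeasure P] {f g : Ω → ℝ} (hf : MemLp f 2 P) (hg : MemLp g 2 P) :
    Integrable (fun ω => f ω * g ω) P := by
  have h := L2.integrable_inner (𝕜 := ℝ) (hf.toLp f) (hg.toLp g)
  refine h.congr ?_
  filter_upwards [hf.coeFn_toLp, hg.coeFn_toLp] with ω h1 h2
  simp [h1, h2, RCLike.inner_apply, mul_comm]

theorem corr_le {Ω : Type*} {mΩ : MeasurableSpace Ω} (P : Measure Ω)
    [IsProbabilityMeasure P] {𝒜 ℬ : MeasurableSpace Ω} (h𝒜 : 𝒜 ≤ mΩ) (hℬ : ℬ ≤ mΩ)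
    (hψ : psiDep P 𝒜 ℬ ≠ ⊤) {X Y : Ω → ℝ} (hX : Measurable[𝒜] X) (hY : Measurable[ℬ] Y)
    (hX2 : MemLp X 2 P) (hY2 : MemLp Y 2 P) :
    |corrRV P X Y| ≤ (psiDep P 𝒜 ℬ).toReal := by
  set ψ := (psiDep P 𝒜 ℬ).toReal with hψdef
  have hψ0 : 0 ≤ ψ := ENNReal.toReal_nonneg
  set EX := ∫ ω, X ω ∂P with hEX
  set EY := ∫ ω, Y ω ∂P with hEY
  have hX1 : Integrable X P := hX2.integrable one_le_two
  have hY1 : Integrable Y P := hY2.integrable one_le_two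
  have hXY : Integrable (fun ω => X ω * Y ω) P := memℒp2_integrable_mul P hX2 hY2
  have hXX : Integrable (fun ω => X ω * X ω) P := memℒp2_integrable_mul P hX2 hX2
  have hYY : Integrable (fun ω => Y ω * Y ω) P := memℒp2_integrable_mul P hY2 hY2
  set Xt := fun ω => X ω - EX with hXt
  set Yt := fun ω => Y ω - EY with hYt
  have hXt2 : MemLp Xt 2 P := hX2.sub (memLp_const EX)
  have hYt2 : MemLp Yt 2 P := hY2.sub (memLp_const EY)
  have hXtm : Measurable[𝒜] Xt := hX.sub measurable_const
  have hYtm : Measurable[ℬ] Yt := hY.sub measurable_const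
  have e0X : ∫ ω, Xt ω ∂P = 0 := by
    simp only [hXt]
    rw [integral_sub hX1 (integrable_const EX)]
    simp [hEX]
  have ecov : ∫ ω, Xt ω * Yt ω ∂P = (∫ ω, X ω * Y ω ∂P) - EX * EY := by
    have hpt : (fun ω => Xt ω * Yt ω)
        = fun ω => X ω * Y ω - EX * Y ω - EY * X ω + EX * EY :=
      funext fun ω => by simp only [hXt, hYt]; ring
    have hI1 : Integrable (fun ω => X ω * Y ω - EX * Y ω) P := hXY.sub (hY1.const_mul EX)
    have hI2 : Integrable (fun ω => X ω * Y ω - EX * Y ω - EY * X ω) P :=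
      hI1.sub (hX1.const_mul EY)
    rw [hpt, integral_add hI2 (integrable_const _), integral_sub hI1 (hX1.const_mul EY),
      integral_sub hXY (hY1.const_mul EX), integral_const_mul, integral_const_mul,
      integral_const]
    simp only [measure_univ, ENNReal.toReal_one, smul_eq_mul, one_mul, probReal_univ, ← hEX, ← hEY]
    ring
  have evarX : ∫ ω, Xt ω ^ 2 ∂P = (∫ ω, X ω ^ 2 ∂P) - EX ^ 2 := by
    have hpt : (fun ω => Xt ω ^ 2) = fun ω => X ω * X ω - 2 * EX * X ω + EX ^ 2 :=
      funext fun ω => by simp only [hXt]; ring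
    have hsq : ∫ ω, X ω ^ 2 ∂P = ∫ ω, X ω * X ω ∂P :=
      integral_congr_ae (ae_of_all _ fun ω => sq (X ω))
    have hJ : Integrable (fun ω => X ω * X ω - 2 * EX * X ω) P :=
      hXX.sub (hX1.const_mul (2 * EX))
    rw [hpt, integral_add hJ (integrable_const _),
      integral_sub hXX (hX1.const_mul (2 * EX)), integral_const_mul, integral_const, hsq]
    simp only [measure_univ, ENNReal.toReal_one, smul_eq_mul, one_mul, probReal_univ, ← hEX]
    ring
  have evarY : ∫ ω, Yt ω ^ 2 ∂P = (∫ ω, Y ω ^ 2 ∂P) - EY ^ 2 := by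
    have hpt : (fun ω => Yt ω ^ 2) = fun ω => Y ω * Y ω - 2 * EY * Y ω + EY ^ 2 :=
      funext fun ω => by simp only [hYt]; ring
    have hsq : ∫ ω, Y ω ^ 2 ∂P = ∫ ω, Y ω * Y ω ∂P :=
      integral_congr_ae (ae_of_all _ fun ω => sq (Y ω))
    have hJ : Integrable (fun ω => Y ω * Y ω - 2 * EY * Y ω) P :=
      hYY.sub (hY1.const_mul (2 * EY))
    rw [hpt, integral_add hJ (integrable_const _),
      integral_sub hYY (hY1.const_mul (2 * EY)), integral_const_mul, integral_const, hsq]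
    simp only [measure_univ, ENNReal.toReal_one, smul_eq_mul, one_mul, probReal_univ, ← hEY]
    ring
  have hVx0 : 0 ≤ (∫ ω, X ω ^ 2 ∂P) - EX ^ 2 := by
    rw [← evarX]; exact integral_nonneg fun ω => sq_nonneg _
  have hVy0 : 0 ≤ (∫ ω, Y ω ^ 2 ∂P) - EY ^ 2 := by
    rw [← evarY]; exact integral_nonneg fun ω => sq_nonneg _
  have hkey := cov_bound P h𝒜 hℬ hψ hXtm hYtm hXt2 hYt2
  rw [e0X, zero_mul, sub_zero, ecov] at hkey
  have habs1 : ∫ ω, |Xt ω| ∂P ≤ Real.sqrt ((∫ ω, X ω ^ 2 ∂P) - EX ^ 2) := by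
    rw [← evarX]; exact abs_integral_le_sqrt P hXt2
  have habs2 : ∫ ω, |Yt ω| ∂P ≤ Real.sqrt ((∫ ω, Y ω ^ 2 ∂P) - EY ^ 2) := by
    rw [← evarY]; exact abs_integral_le_sqrt P hYt2
  have hint1 : 0 ≤ ∫ ω, |Xt ω| ∂P := integral_nonneg fun ω => abs_nonneg _
  have hint2 : 0 ≤ ∫ ω, |Yt ω| ∂P := integral_nonneg fun ω => abs_nonneg _
  set D := Real.sqrt (((∫ ω, X ω ^ 2 ∂P) - EX ^ 2) * ((∫ ω, Y ω ^ 2 ∂P) - EY ^ 2)) with hD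
  have hDeq : D = Real.sqrt ((∫ ω, X ω ^ 2 ∂P) - EX ^ 2)
      * Real.sqrt ((∫ ω, Y ω ^ 2 ∂P) - EY ^ 2) := Real.sqrt_mul hVx0 _
  have hcov_le : |(∫ ω, X ω * Y ω ∂P) - EX * EY| ≤ ψ * D := by
    refine hkey.trans ?_
    rw [hDeq]
    refine mul_le_mul_of_nonneg_left ?_ hψ0
    exact mul_le_mul habs1 habs2 hint2 (Real.sqrt_nonneg _)
  have hD0 : 0 ≤ D := Real.sqrt_nonneg _
  rw [corrRV, abs_div, abs_of_nonneg hD0]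
  rcases eq_or_lt_of_le hD0 with h0 | hpos
  · rw [← h0, div_zero]; exact hψ0
  · rw [div_le_iff₀ hpos]
    exact hcov_le

end Helpers

/-- Eq. (1.5), last part: ρ(A,B) ≤ ψ(A,B). -/
theorem stmt11 {Ω : Type*} {mΩ : MeasurableSpace Ω} (P : Measure Ω) [IsProbabilityMeasure P]
    (𝒜 ℬ : MeasurableSpace Ω) (h𝒜 : 𝒜 ≤ mΩ) (hℬ : ℬ ≤ mΩ) :
    ENNReal.ofReal (rhoDep P 𝒜 ℬ) ≤ psiDep P 𝒜 ℬ := by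
  rcases eq_or_ne (psiDep P 𝒜 ℬ) ⊤ with htop | hψ
  · rw [htop]; exact le_top
  refine ENNReal.ofReal_le_of_le_toReal ?_
  refine Real.sSup_le ?_ ENNReal.toReal_nonneg
  rintro r ⟨X, Y, hX, hY, hX2, hY2, rfl⟩
  exact corr_le P h𝒜 hℬ hψ hX hY hX2 hY2
end

section
/- There exists a universal positive constant A such that for every t ∈ [0,1] there exist a probability space (Ω, F, P) and sub-σ-fields A and B of F such that τ(A, B) ≤ t and ρ(A, B) ≥ A · t · (1 − log t). -/
open MeasureTheory ProbabilityTheory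
open scoped ENNReal

namespace Stmt14Aux
open Finset MeasureTheory


noncomputable def rr : ℝ := (Real.sqrt 2)⁻¹

lemma sqrt2_mul_self : Real.sqrt 2 * Real.sqrt 2 = 2 := Real.mul_self_sqrt (by norm_num)

lemma sqrt2_pos : 0 < Real.sqrt 2 := Real.sqrt_pos.2 (by norm_num)

lemma sqrt2_le : Real.sqrt 2 ≤ 1.5 := by
  nlinarith [sqrt2_mul_self, sqrt2_pos]

lemma sqrt2_ge : (4/3 : ℝ) ≤ Real.sqrt 2 := by
  nlinarith [sqrt2_mul_self, sqrt2_pos]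

lemma rr_pos : 0 < rr := by
  simp [rr, sqrt2_pos]

lemma rr_le : rr ≤ 3/4 := by
  rw [rr, inv_le_comm₀ sqrt2_pos (by norm_num)]
  linarith [sqrt2_ge]

lemma rr_sq : rr * rr = 2⁻¹ := by
  rw [rr, ← mul_inv]
  rw [sqrt2_mul_self]

lemma half_le_rr : (2⁻¹:ℝ) ≤ rr := by
  rw [rr, le_inv_comm₀ (by norm_num) sqrt2_pos]
  simp

lemma geom4 (N : ℕ) : ∑ i ∈ range N, rr ^ i ≤ 4 := by
  have h1 : rr ≠ 1 := by nlinarith [rr_le, rr_pos]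
  rw [geom_sum_eq h1]
  rw [div_le_iff_of_neg (by nlinarith [rr_le])]
  nlinarith [pow_nonneg rr_pos.le N, rr_le]

lemma half_geom (N : ℕ) : ∑ i ∈ range N, (2⁻¹:ℝ)^(i+1) = 1 - (2⁻¹)^N := by
  induction N with
  | zero => simp
  | succ k ih => rw [Finset.sum_range_succ, ih]; ring




variable (n : ℕ)

noncomputable def pw (k : Fin (n+1)) : ℝ :=
  if (k:ℕ) < n then (2⁻¹:ℝ)^((k:ℕ)+1) else (2⁻¹:ℝ)^n

noncomputable def gw (k : Fin (n+1)) : ℝ := (Real.sqrt 2)^(k:ℕ)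

noncomputable def muw : ℝ := ∑ k, pw n k * gw n k

noncomputable def fw (k : Fin (n+1)) : ℝ := gw n k - muw n

noncomputable def Vw : ℝ := ∑ k, pw n k * fw n k ^ 2

noncomputable def epsw : ℝ := (1/25) * (2⁻¹:ℝ)^n

noncomputable def ww (x : Fin (n+1) × Fin (n+1)) : ℝ :=
  pw n x.1 * pw n x.2 * (1 + epsw n * (fw n x.1 * fw n x.2))

variable {n}

lemma pw_pos (k : Fin (n+1)) : 0 < pw n k := by
  rw [pw]; split <;> positivity

lemma pw_le (k : Fin (n+1)) : pw n k ≤ (2⁻¹:ℝ)^(k:ℕ) := by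
  rw [pw]; split
  · exact pow_le_pow_of_le_one (by norm_num) (by norm_num) (Nat.le_succ _)
  · have h : (k:ℕ) = n := by omega
    rw [h]

lemma pw_ge (k : Fin (n+1)) : (2⁻¹:ℝ)^((k:ℕ)+1) ≤ pw n k := by
  rw [pw]; split
  · exact le_refl _
  · have h : (k:ℕ) = n := by omega
    rw [h]
    exact pow_le_pow_of_le_one (by norm_num) (by norm_num) (Nat.le_succ _)

lemma sum_pw : ∑ k, pw n k = 1 := by
  rw [Fin.sum_univ_castSucc]
  have h1 : ∀ i : Fin n, pw n i.castSucc = (2⁻¹:ℝ)^((i:ℕ)+1) := by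
    intro i
    rw [pw]
    simp [i.isLt]
  have h2 : pw n (Fin.last n) = (2⁻¹:ℝ)^n := by
    rw [pw]; simp
  rw [h2]
  rw [Finset.sum_congr rfl (fun i _ => h1 i)]
  rw [Fin.sum_univ_eq_sum_range (fun i => (2⁻¹:ℝ)^(i+1)) n, half_geom]
  ring

lemma gw_nonneg (k : Fin (n+1)) : 0 ≤ gw n k := pow_nonneg sqrt2_pos.le _

lemma pw_mul_gw_le (k : Fin (n+1)) : pw n k * gw n k ≤ rr ^ (k:ℕ) := by
  have h : (2⁻¹:ℝ) * Real.sqrt 2 = rr := by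
    rw [rr]
    field_simp
    exact Real.sq_sqrt (by norm_num)
  calc pw n k * gw n k ≤ (2⁻¹:ℝ)^(k:ℕ) * (Real.sqrt 2)^(k:ℕ) :=
        mul_le_mul_of_nonneg_right (pw_le k) (gw_nonneg k)
    _ = ((2⁻¹:ℝ) * Real.sqrt 2)^(k:ℕ) := (mul_pow _ _ _).symm
    _ = rr ^ (k:ℕ) := by rw [h]

lemma pw_le_rr (k : Fin (n+1)) : pw n k ≤ rr ^ (k:ℕ) :=
  (pw_le k).trans (pow_le_pow_left₀ (by norm_num) half_le_rr _)

lemma tail_bound (S : Finset (Fin (n+1))) (hS : S.Nonempty) :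
    ∑ k ∈ S, rr ^ (k:ℕ) ≤ 4 * rr ^ ((S.min' hS : Fin (n+1)) : ℕ) := by
  set m : ℕ := ((S.min' hS : Fin (n+1)) : ℕ) with hm
  have hmin : ∀ k ∈ S, m ≤ (k:ℕ) := fun k hk => Fin.le_iff_val_le_val.1 (S.min'_le k hk)
  have step : ∀ k ∈ S, rr ^ (k:ℕ) = rr ^ m * rr ^ ((k:ℕ) - m) := by
    intro k hk
    rw [← pow_add, Nat.add_sub_cancel' (hmin k hk)]
  rw [Finset.sum_congr rfl step, ← Finset.mul_sum]
  have hinj : Set.InjOn (fun k : Fin (n+1) => (k:ℕ) - m) S := by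
    intro a ha b hb hab
    have := hmin a ha; have := hmin b hb
    apply Fin.ext; simp only at hab; omega
  have himg : ∑ k ∈ S, rr ^ ((k:ℕ) - m) = ∑ j ∈ S.image (fun k : Fin (n+1) => (k:ℕ) - m), rr ^ j :=
    (Finset.sum_image (fun a ha b hb h => hinj ha hb h)).symm
  have hsub : S.image (fun k : Fin (n+1) => (k:ℕ) - m) ⊆ Finset.range (n+1) := by
    intro j hj
    rcases Finset.mem_image.1 hj with ⟨k, hk, rfl⟩
    exact Finset.mem_range.2 (by omega)
  have hle : ∑ j ∈ S.image (fun k : Fin (n+1) => (k:ℕ) - m), rr ^ j ≤ ∑ j ∈ Finset.range (n+1), rr ^ j :=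
    Finset.sum_le_sum_of_subset_of_nonneg hsub (fun j _ _ => pow_nonneg rr_pos.le j)
  have := (geom4 (n+1))
  have h4 : ∑ k ∈ S, rr ^ ((k:ℕ) - m) ≤ 4 := by rw [himg]; linarith
  calc rr ^ m * ∑ k ∈ S, rr ^ ((k:ℕ) - m) ≤ rr ^ m * 4 :=
        mul_le_mul_of_nonneg_left h4 (pow_nonneg rr_pos.le m)
    _ = 4 * rr ^ m := by ring

lemma muw_nonneg : 0 ≤ muw n :=
  Finset.sum_nonneg fun k _ => mul_nonneg (pw_pos k).le (gw_nonneg k)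

lemma muw_le : muw n ≤ 4 := by
  have h1 : muw n ≤ ∑ k : Fin (n+1), rr ^ (k:ℕ) :=
    Finset.sum_le_sum fun k _ => pw_mul_gw_le k
  have h2 : ∑ k : Fin (n+1), rr ^ (k:ℕ) = ∑ i ∈ range (n+1), rr ^ i :=
    Fin.sum_univ_eq_sum_range (fun i => rr ^ i) (n+1)
  have := geom4 (n+1)
  linarith

lemma sum_pw_fw : ∑ k, pw n k * fw n k = 0 := by
  have : ∀ k : Fin (n+1), pw n k * fw n k = pw n k * gw n k - muw n * pw n k := by
    intro k; rw [fw]; ring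
  rw [Finset.sum_congr rfl (fun k _ => this k), Finset.sum_sub_distrib, ← Finset.mul_sum, sum_pw]
  rw [← muw]; ring

lemma sum_pw_nonneg (S : Finset (Fin (n+1))) : 0 ≤ ∑ k ∈ S, pw n k :=
  Finset.sum_nonneg fun k _ => (pw_pos k).le

lemma sum_pw_le_one (S : Finset (Fin (n+1))) : ∑ k ∈ S, pw n k ≤ 1 := by
  have h : ∑ k ∈ S, pw n k ≤ ∑ k : Fin (n+1), pw n k :=
    Finset.sum_le_sum_of_subset_of_nonneg (Finset.subset_univ S) (fun k _ _ => (pw_pos k).le)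
  rw [sum_pw] at h; exact h

lemma absF_le (S : Finset (Fin (n+1))) (hS : S.Nonempty) :
    |∑ k ∈ S, pw n k * fw n k| ≤ 29 * Real.sqrt (∑ k ∈ S, pw n k) := by
  set m : ℕ := ((S.min' hS : Fin (n+1)) : ℕ) with hm
  have hrrS : ∑ k ∈ S, rr ^ (k:ℕ) ≤ 4 * rr ^ m := tail_bound S hS
  have hsplit : ∑ k ∈ S, pw n k * fw n k
      = ∑ k ∈ S, pw n k * gw n k - muw n * ∑ k ∈ S, pw n k := by
    rw [Finset.mul_sum, ← Finset.sum_sub_distrib]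
    exact Finset.sum_congr rfl fun k _ => by rw [fw]; ring
  have h1 : ∑ k ∈ S, pw n k * gw n k ≤ 4 * rr ^ m :=
    le_trans (Finset.sum_le_sum fun k _ => pw_mul_gw_le k) hrrS
  have h1' : 0 ≤ ∑ k ∈ S, pw n k * gw n k :=
    Finset.sum_nonneg fun k _ => mul_nonneg (pw_pos k).le (gw_nonneg k)
  have hps : ∑ k ∈ S, pw n k ≤ 4 * rr ^ m :=
    le_trans (Finset.sum_le_sum fun k _ => pw_le_rr k) hrrS
  have h2 : muw n * ∑ k ∈ S, pw n k ≤ 16 * rr ^ m := by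
    have := mul_le_mul (muw_le (n:=n)) hps (sum_pw_nonneg S) (by norm_num : (0:ℝ) ≤ 4)
    linarith
  have h2' : 0 ≤ muw n * ∑ k ∈ S, pw n k := mul_nonneg muw_nonneg (sum_pw_nonneg S)
  have habs : |∑ k ∈ S, pw n k * fw n k| ≤ 20 * rr ^ m := by
    rw [hsplit, abs_sub_comm, abs_sub_le_iff]
    constructor <;> nlinarith [pow_nonneg rr_pos.le m]
  -- rr ^ m ≤ sqrt 2 * sqrt (∑ pw)
  have hmem : (S.min' hS) ∈ S := S.min'_mem hS
  have hpm : (2⁻¹:ℝ) ^ m ≤ 2 * ∑ k ∈ S, pw n k := by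
    have hge : (2⁻¹:ℝ) ^ (m+1) ≤ pw n (S.min' hS) := pw_ge _
    have hle : pw n (S.min' hS) ≤ ∑ k ∈ S, pw n k :=
      Finset.single_le_sum (fun k _ => (pw_pos k).le) hmem
    have : (2⁻¹:ℝ) ^ m = 2 * (2⁻¹:ℝ) ^ (m+1) := by ring
    linarith
  have hrrm : rr ^ m ≤ Real.sqrt 2 * Real.sqrt (∑ k ∈ S, pw n k) := by
    have hsq : (rr ^ m) ^ 2 = (2⁻¹:ℝ) ^ m := by
      rw [← pow_mul, pow_mul']
      congr 1
      rw [pow_two, rr_sq]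
    have h0 : 0 ≤ rr ^ m := pow_nonneg rr_pos.le m
    have := Real.sqrt_le_sqrt (le_trans (le_of_eq hsq) hpm)
    rw [Real.sqrt_sq h0, Real.sqrt_mul (by norm_num : (0:ℝ) ≤ 2)] at this
    exact this
  have hsqrt2 : Real.sqrt 2 ≤ 1.45 := by
    nlinarith [Real.mul_self_sqrt (show (0:ℝ) ≤ 2 by norm_num), Real.sqrt_nonneg 2]
  have hsn : 0 ≤ Real.sqrt (∑ k ∈ S, pw n k) := Real.sqrt_nonneg _
  nlinarith [Real.sqrt_nonneg (2:ℝ)]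

lemma absF_compl (S : Finset (Fin (n+1))) :
    ∑ k ∈ Finset.univ \ S, pw n k * fw n k = - ∑ k ∈ S, pw n k * fw n k := by
  have h := Finset.sum_sdiff (Finset.subset_univ S) (f := fun k => pw n k * fw n k)
  have h0 : ∑ k, pw n k * fw n k = 0 := sum_pw_fw
  linarith

lemma sum_pw_compl (S : Finset (Fin (n+1))) :
    ∑ k ∈ Finset.univ \ S, pw n k = 1 - ∑ k ∈ S, pw n k := by
  have h := Finset.sum_sdiff (Finset.subset_univ S) (f := fun k => pw n k)
  have h0 : ∑ k, pw n k = 1 := sum_pw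
  linarith

lemma absF_main (S : Finset (Fin (n+1))) :
    |∑ k ∈ S, pw n k * fw n k| ≤ 42 * Real.sqrt ((∑ k ∈ S, pw n k) * (1 - ∑ k ∈ S, pw n k)) := by
  rcases S.eq_empty_or_nonempty with rfl | hS
  · simp [Real.sqrt_nonneg]
  rcases (Finset.univ \ S).eq_empty_or_nonempty with hc | hc
  · -- S = univ
    have hSu : S = Finset.univ := by
      rw [Finset.sdiff_eq_empty_iff_subset] at hc
      exact Finset.Subset.antisymm (Finset.subset_univ S) hc
    rw [hSu]
    have h0 : ∑ k, pw n k * fw n k = 0 := sum_pw_fw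
    rw [h0]
    simp [Real.sqrt_nonneg]
  · set a := ∑ k ∈ S, pw n k with ha
    have ha0 : 0 ≤ a := sum_pw_nonneg S
    have ha1 : a ≤ 1 := sum_pw_le_one S
    have hb1 : |∑ k ∈ S, pw n k * fw n k| ≤ 29 * Real.sqrt a := absF_le S hS
    have hb2 : |∑ k ∈ S, pw n k * fw n k| ≤ 29 * Real.sqrt (1 - a) := by
      have := absF_le (Finset.univ \ S) hc
      rw [absF_compl, abs_neg, sum_pw_compl] at this
      exact this
    have hsq1 : (∑ k ∈ S, pw n k * fw n k)^2 ≤ 841 * a := by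
      have := Real.sq_sqrt ha0
      nlinarith [abs_nonneg (∑ k ∈ S, pw n k * fw n k), Real.sqrt_nonneg a,
        sq_abs (∑ k ∈ S, pw n k * fw n k)]
    have hsq2 : (∑ k ∈ S, pw n k * fw n k)^2 ≤ 841 * (1 - a) := by
      have := Real.sq_sqrt (by linarith : (0:ℝ) ≤ 1 - a)
      nlinarith [abs_nonneg (∑ k ∈ S, pw n k * fw n k), Real.sqrt_nonneg (1-a),
        sq_abs (∑ k ∈ S, pw n k * fw n k)]
    have hmin : (∑ k ∈ S, pw n k * fw n k)^2 ≤ 1764 * (a * (1 - a)) := by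
      rcases le_total a (1 - a) with h | h
      · nlinarith
      · nlinarith
    have h42 : (0:ℝ) ≤ 42 := by norm_num
    have := Real.sqrt_le_sqrt hmin
    rw [Real.sqrt_sq_eq_abs] at this
    calc |∑ k ∈ S, pw n k * fw n k| ≤ Real.sqrt (1764 * (a * (1-a))) := this
      _ = 42 * Real.sqrt (a * (1-a)) := by
          rw [show (1764:ℝ) = 42^2 by norm_num, Real.sqrt_mul (by positivity), Real.sqrt_sq h42]

lemma gw_sq (k : Fin (n+1)) : gw n k ^ 2 = 2 ^ (k:ℕ) := by
  rw [gw, ← pow_mul, pow_mul']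
  congr 1
  rw [pow_two]
  exact Real.mul_self_sqrt (by norm_num)

lemma Vw_eq : Vw n = (∑ k, pw n k * gw n k ^ 2) - muw n ^ 2 := by
  rw [Vw]
  have expand : ∀ k : Fin (n+1), pw n k * fw n k ^ 2
      = (pw n k * gw n k ^ 2 - 2 * muw n * (pw n k * gw n k)) + muw n ^ 2 * pw n k := by
    intro k; rw [fw]; ring
  rw [Finset.sum_congr rfl (fun k _ => expand k), Finset.sum_add_distrib,
    Finset.sum_sub_distrib, ← Finset.mul_sum, ← Finset.mul_sum, sum_pw, ← muw]
  ring

lemma Vw_ge : ((n:ℝ)+1)/2 - 16 ≤ Vw n := by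
  have hterm : ∀ k : Fin (n+1), (2⁻¹:ℝ) ≤ pw n k * gw n k ^ 2 := by
    intro k
    rw [gw_sq]
    calc (2⁻¹:ℝ) = (2⁻¹:ℝ)^((k:ℕ)+1) * 2 ^ (k:ℕ) := by
          have h : (2⁻¹:ℝ)^(k:ℕ) * 2^(k:ℕ) = 1 := by rw [← mul_pow]; norm_num
          rw [pow_succ]
          linear_combination (-(2⁻¹:ℝ)) * h
      _ ≤ pw n k * 2 ^ (k:ℕ) :=
          mul_le_mul_of_nonneg_right (pw_ge k) (by positivity)
  have hsum : ((n:ℝ)+1) * 2⁻¹ ≤ ∑ k, pw n k * gw n k ^ 2 := by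
    have := Finset.card_nsmul_le_sum Finset.univ (fun k => pw n k * gw n k ^ 2) 2⁻¹
      (fun k _ => hterm k)
    simp only [Finset.card_univ, Fintype.card_fin, nsmul_eq_mul] at this
    push_cast at this
    linarith
  have hmu : muw n ^ 2 ≤ 16 := by nlinarith [muw_le (n:=n), muw_nonneg (n:=n)]
  rw [Vw_eq]
  linarith

lemma abs_fw_le (k : Fin (n+1)) : |fw n k| ≤ 5 * Real.sqrt 2 ^ n := by
  have h1 : (1:ℝ) ≤ Real.sqrt 2 := by
    nlinarith [Real.mul_self_sqrt (show (0:ℝ) ≤ 2 by norm_num), Real.sqrt_nonneg 2]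
  have hgw : gw n k ≤ Real.sqrt 2 ^ n := by
    rw [gw]
    exact pow_le_pow_right₀ h1 (by omega)
  have hpow : (1:ℝ) ≤ Real.sqrt 2 ^ n := one_le_pow₀ h1
  rw [fw, abs_sub_le_iff]
  constructor
  · have := muw_nonneg (n:=n); linarith
  · have := muw_le (n:=n); have := gw_nonneg (n:=n) k; linarith

lemma epsw_pos : 0 < epsw n := by rw [epsw]; positivity

lemma eps_fw_bound (a b : Fin (n+1)) : |epsw n * (fw n a * fw n b)| ≤ 1 := by
  have h2 : (Real.sqrt 2 ^ n)^2 = 2^n := by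
    rw [← pow_mul, pow_mul']
    congr 1
    rw [pow_two]
    exact Real.mul_self_sqrt (by norm_num)
  have ha := abs_fw_le a
  have hb := abs_fw_le b
  have hnn : (0:ℝ) ≤ Real.sqrt 2 ^ n := by positivity
  have habs : |fw n a * fw n b| ≤ 25 * 2^n := by
    rw [abs_mul]
    calc |fw n a| * |fw n b| ≤ (5 * Real.sqrt 2 ^ n) * (5 * Real.sqrt 2 ^ n) :=
        mul_le_mul ha hb (abs_nonneg _) (by positivity)
      _ = 25 * 2^n := by nlinarith [h2]
  rw [abs_mul, abs_of_pos (epsw_pos (n:=n)), epsw]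
  have hpow : (2⁻¹:ℝ)^n * (2:ℝ)^n = 1 := by
    rw [← mul_pow]; norm_num
  calc 1/25 * (2⁻¹:ℝ)^n * |fw n a * fw n b| ≤ 1/25 * (2⁻¹:ℝ)^n * (25 * 2^n) := by
        apply mul_le_mul_of_nonneg_left habs (by positivity)
    _ = 1 := by
        field_simp
        rw [← mul_pow]; norm_num

lemma ww_nonneg (x : Fin (n+1) × Fin (n+1)) : 0 ≤ ww n x := by
  have h := eps_fw_bound (n:=n) x.1 x.2
  have h1 : -1 ≤ epsw n * (fw n x.1 * fw n x.2) := (abs_le.1 h).1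
  have := pw_pos (n:=n) x.1
  have := pw_pos (n:=n) x.2
  rw [ww]
  have h2 : 0 ≤ 1 + epsw n * (fw n x.1 * fw n x.2) := by linarith
  exact mul_nonneg (mul_nonneg (pw_pos x.1).le (pw_pos x.2).le) h2

lemma sum_prod (S T : Finset (Fin (n+1))) (a b : Fin (n+1) → ℝ) :
    ∑ x ∈ S ×ˢ T, ww n x * (a x.1 * b x.2)
      = (∑ k ∈ S, pw n k * a k) * (∑ k ∈ T, pw n k * b k)
        + epsw n * ((∑ k ∈ S, pw n k * fw n k * a k) * (∑ k ∈ T, pw n k * fw n k * b k)) := by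
  have hterm : ∀ x : Fin (n+1) × Fin (n+1), ww n x * (a x.1 * b x.2)
      = (pw n x.1 * a x.1) * (pw n x.2 * b x.2)
        + epsw n * ((pw n x.1 * fw n x.1 * a x.1) * (pw n x.2 * fw n x.2 * b x.2)) := by
    intro x; rw [ww]; ring
  rw [Finset.sum_congr rfl (fun x _ => hterm x), Finset.sum_add_distrib]
  have h1 : ∑ x ∈ S ×ˢ T, (pw n x.1 * a x.1) * (pw n x.2 * b x.2)
      = (∑ k ∈ S, pw n k * a k) * (∑ k ∈ T, pw n k * b k) := by
    rw [Finset.sum_mul_sum]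
    exact Finset.sum_product' S T (fun j k => (pw n j * a j) * (pw n k * b k))
  have h2 : ∑ x ∈ S ×ˢ T, epsw n * ((pw n x.1 * fw n x.1 * a x.1) * (pw n x.2 * fw n x.2 * b x.2))
      = epsw n * ((∑ k ∈ S, pw n k * fw n k * a k) * (∑ k ∈ T, pw n k * fw n k * b k)) := by
    rw [Finset.sum_mul_sum, Finset.mul_sum]
    rw [Finset.sum_product' S T (fun j k => epsw n * ((pw n j * fw n j * a j) * (pw n k * fw n k * b k)))]
    apply Finset.sum_congr rfl
    intro j _
    rw [Finset.mul_sum]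
  rw [h1, h2]

lemma sum_ww_prod (S T : Finset (Fin (n+1))) :
    ∑ x ∈ S ×ˢ T, ww n x
      = (∑ k ∈ S, pw n k) * (∑ k ∈ T, pw n k)
        + epsw n * ((∑ k ∈ S, pw n k * fw n k) * (∑ k ∈ T, pw n k * fw n k)) := by
  have := sum_prod (n:=n) S T (fun _ => 1) (fun _ => 1)
  simpa using this

lemma sum_ww_univ : ∑ x : Fin (n+1) × Fin (n+1), ww n x = 1 := by
  rw [← Finset.univ_product_univ, sum_ww_prod, sum_pw, sum_pw_fw]
  ring

variable (n)

noncomputable def Pm : Measure (Fin (n+1) × Fin (n+1)) :=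
  ∑ x : Fin (n+1) × Fin (n+1), ENNReal.ofReal (ww n x) • Measure.dirac x

variable {n}

lemma Pm_apply (A : Set (Fin (n+1) × Fin (n+1))) :
    Pm n A = ∑ x ∈ (Set.toFinite A).toFinset, ENNReal.ofReal (ww n x) := by
  classical
  rw [Pm, Measure.finset_sum_apply]
  simp only [Measure.smul_apply, smul_eq_mul, Measure.dirac_apply, Set.indicator_apply,
    Pi.one_apply, mul_ite, mul_one, mul_zero]
  rw [← Finset.sum_filter]
  apply Finset.sum_congr _ (fun x _ => rfl)
  ext x
  simp only [Finset.mem_filter, Finset.mem_univ, true_and, Set.Finite.mem_toFinset]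

lemma Pm_apply_toReal (A : Set (Fin (n+1) × Fin (n+1))) :
    (Pm n A).toReal = ∑ x ∈ (Set.toFinite A).toFinset, ww n x := by
  rw [Pm_apply, ENNReal.toReal_sum (fun a _ => ENNReal.ofReal_ne_top)]
  exact Finset.sum_congr rfl fun x hx => ENNReal.toReal_ofReal (ww_nonneg x)

lemma Pm_univ : Pm n Set.univ = 1 := by
  rw [Pm_apply]
  have h : (Set.toFinite (Set.univ : Set (Fin (n+1) × Fin (n+1)))).toFinset = Finset.univ := by
    ext x; simp [Set.Finite.mem_toFinset]
  rw [h, ← ENNReal.ofReal_sum_of_nonneg (fun x _ => ww_nonneg x), sum_ww_univ]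
  simp

instance Pm_prob : IsProbabilityMeasure (Pm n) := ⟨Pm_univ⟩

lemma integral_Pm (φ : Fin (n+1) × Fin (n+1) → ℝ) :
    ∫ x, φ x ∂(Pm n) = ∑ x, ww n x * φ x := by
  rw [integral_fintype (Integrable.of_finite)]
  apply Finset.sum_congr rfl
  intro x _
  have h : (Set.toFinite ({x} : Set (Fin (n+1) × Fin (n+1)))).toFinset = {x} := by
    ext y; simp [Set.Finite.mem_toFinset]
  rw [measureReal_def, Pm_apply_toReal, h, Finset.sum_singleton, smul_eq_mul]

lemma tf_preimage_fst (S : Set (Fin (n+1))) :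
    (Set.toFinite (Prod.fst ⁻¹' S : Set (Fin (n+1) × Fin (n+1)))).toFinset
      = (Set.toFinite S).toFinset ×ˢ Finset.univ := by
  ext x
  simp [Set.Finite.mem_toFinset, Finset.mem_product]

lemma tf_preimage_snd (T : Set (Fin (n+1))) :
    (Set.toFinite (Prod.snd ⁻¹' T : Set (Fin (n+1) × Fin (n+1)))).toFinset
      = Finset.univ ×ˢ (Set.toFinite T).toFinset := by
  ext x
  simp [Set.Finite.mem_toFinset, Finset.mem_product]

lemma tf_inter (S T : Set (Fin (n+1))) :
    (Set.toFinite ((Prod.fst ⁻¹' S ∩ Prod.snd ⁻¹' T) : Set (Fin (n+1) × Fin (n+1)))).toFinset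
      = (Set.toFinite S).toFinset ×ˢ (Set.toFinite T).toFinset := by
  ext x
  simp [Set.Finite.mem_toFinset, Finset.mem_product]

lemma Pm_fst (S : Set (Fin (n+1))) :
    (Pm n (Prod.fst ⁻¹' S)).toReal = ∑ k ∈ (Set.toFinite S).toFinset, pw n k := by
  rw [Pm_apply_toReal, tf_preimage_fst, sum_ww_prod, sum_pw, sum_pw_fw]
  ring

lemma Pm_snd (T : Set (Fin (n+1))) :
    (Pm n (Prod.snd ⁻¹' T)).toReal = ∑ k ∈ (Set.toFinite T).toFinset, pw n k := by
  rw [Pm_apply_toReal, tf_preimage_snd, sum_ww_prod, sum_pw, sum_pw_fw]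
  ring

lemma Pm_inter (S T : Set (Fin (n+1))) :
    (Pm n (Prod.fst ⁻¹' S ∩ Prod.snd ⁻¹' T)).toReal
      = (∑ k ∈ (Set.toFinite S).toFinset, pw n k) * (∑ k ∈ (Set.toFinite T).toFinset, pw n k)
        + epsw n * ((∑ k ∈ (Set.toFinite S).toFinset, pw n k * fw n k)
          * (∑ k ∈ (Set.toFinite T).toFinset, pw n k * fw n k)) := by
  rw [Pm_apply_toReal, tf_inter, sum_ww_prod]


lemma moment_ab {n : ℕ} (a b : Fin (n+1) → ℝ) :
    ∫ x, (a x.1 * b x.2) ∂(Pm n)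
      = (∑ k, pw n k * a k) * (∑ k, pw n k * b k)
        + epsw n * ((∑ k, pw n k * fw n k * a k) * (∑ k, pw n k * fw n k * b k)) := by
  rw [integral_Pm (fun x => a x.1 * b x.2)]
  rw [show (Finset.univ : Finset (Fin (n+1) × Fin (n+1))) = Finset.univ ×ˢ Finset.univ from
    Finset.univ_product_univ.symm]
  exact sum_prod Finset.univ Finset.univ a b

lemma sum_pw_fw_fw {n : ℕ} : ∑ k, pw n k * fw n k * fw n k = Vw n := by
  rw [Vw]
  exact Finset.sum_congr rfl fun k _ => by ring

lemma int_X {n : ℕ} : ∫ x, fw n x.1 ∂(Pm n) = 0 := by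
  have h := moment_ab (n:=n) (fw n) (fun _ => 1)
  simp only [mul_one] at h
  rw [sum_pw, sum_pw_fw] at h
  simpa using h

lemma int_Y {n : ℕ} : ∫ x, fw n x.2 ∂(Pm n) = 0 := by
  have h := moment_ab (n:=n) (fun _ => 1) (fw n)
  simp only [one_mul, mul_one] at h
  rw [sum_pw, sum_pw_fw] at h
  simpa using h

lemma int_X2 {n : ℕ} : ∫ x, fw n x.1 ^ 2 ∂(Pm n) = Vw n := by
  have h := moment_ab (n:=n) (fun k => fw n k ^ 2) (fun _ => 1)
  simp only [mul_one] at h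
  rw [sum_pw, sum_pw_fw] at h
  rw [h, Vw]
  ring

lemma int_Y2 {n : ℕ} : ∫ x, fw n x.2 ^ 2 ∂(Pm n) = Vw n := by
  have h := moment_ab (n:=n) (fun _ => 1) (fun k => fw n k ^ 2)
  simp only [one_mul, mul_one] at h
  rw [sum_pw, sum_pw_fw] at h
  rw [h, Vw]
  ring

lemma int_XY {n : ℕ} : ∫ x, fw n x.1 * fw n x.2 ∂(Pm n) = epsw n * Vw n ^ 2 := by
  have h := moment_ab (n:=n) (fw n) (fw n)
  rw [sum_pw_fw, sum_pw_fw_fw] at h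
  rw [h]
  ring

lemma corr_fst_snd {n : ℕ} (hV : 0 < Vw n) :
    corrRV (Pm n) (fun x => fw n x.1) (fun x => fw n x.2) = epsw n * Vw n := by
  rw [corrRV]
  rw [int_XY, int_X, int_Y, int_X2, int_Y2]
  rw [show (Vw n - 0^2) * (Vw n - 0^2) = Vw n * Vw n from by ring, Real.sqrt_mul_self hV.le]
  field_simp
  ring

lemma corr_abs_le_one {n : ℕ} (X Y : Fin (n+1) × Fin (n+1) → ℝ) :
    |corrRV (Pm n) X Y| ≤ 1 := by
  have hw1 : ∑ x : Fin (n+1) × Fin (n+1), ww n x = 1 := sum_ww_univ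
  rw [corrRV]
  rw [integral_Pm (fun x => X x * Y x), integral_Pm X, integral_Pm Y,
    integral_Pm (fun x => X x ^ 2), integral_Pm (fun x => Y x ^ 2)]
  set c := ∑ x, ww n x * X x with hc
  set d := ∑ x, ww n x * Y x with hd
  set cov := (∑ x, ww n x * (X x * Y x)) - c * d with hcov
  set vx := (∑ x, ww n x * X x ^ 2) - c ^ 2 with hvx
  set vy := (∑ x, ww n x * Y x ^ 2) - d ^ 2 with hvy
  have hcov' : ∑ x, ww n x * ((X x - c) * (Y x - d)) = cov := by
    have hterm : ∀ x : Fin (n+1) × Fin (n+1), ww n x * ((X x - c) * (Y x - d))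
        = ww n x * (X x * Y x) - c * (ww n x * Y x) - d * (ww n x * X x) + (c*d) * ww n x :=
      fun x => by ring
    rw [Finset.sum_congr rfl (fun x _ => hterm x), Finset.sum_add_distrib,
      Finset.sum_sub_distrib, Finset.sum_sub_distrib, ← Finset.mul_sum, ← Finset.mul_sum,
      ← Finset.mul_sum, hw1, ← hc, ← hd]
    rw [hcov]
    ring
  have hvx' : ∑ x, ww n x * (X x - c) ^ 2 = vx := by
    have hterm : ∀ x : Fin (n+1) × Fin (n+1), ww n x * (X x - c) ^ 2
        = ww n x * X x ^ 2 - (2*c) * (ww n x * X x) + c^2 * ww n x := fun x => by ring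
    rw [Finset.sum_congr rfl (fun x _ => hterm x), Finset.sum_add_distrib,
      Finset.sum_sub_distrib, ← Finset.mul_sum, ← Finset.mul_sum, hw1, ← hc, hvx]
    ring
  have hvy' : ∑ x, ww n x * (Y x - d) ^ 2 = vy := by
    have hterm : ∀ x : Fin (n+1) × Fin (n+1), ww n x * (Y x - d) ^ 2
        = ww n x * Y x ^ 2 - (2*d) * (ww n x * Y x) + d^2 * ww n x := fun x => by ring
    rw [Finset.sum_congr rfl (fun x _ => hterm x), Finset.sum_add_distrib,
      Finset.sum_sub_distrib, ← Finset.mul_sum, ← Finset.mul_sum, hw1, ← hd, hvy]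
    ring
  have hCS : cov ^ 2 ≤ vx * vy := by
    have h := Finset.sum_mul_sq_le_sq_mul_sq Finset.univ
      (fun x => Real.sqrt (ww n x) * (X x - c)) (fun x => Real.sqrt (ww n x) * (Y x - d))
    have h1 : ∀ x : Fin (n+1) × Fin (n+1),
        (Real.sqrt (ww n x) * (X x - c)) * (Real.sqrt (ww n x) * (Y x - d))
          = ww n x * ((X x - c) * (Y x - d)) := by
      intro x
      have hx := Real.mul_self_sqrt (ww_nonneg (n:=n) x)
      linear_combination (X x - c) * (Y x - d) * hx
    have h2 : ∀ x : Fin (n+1) × Fin (n+1),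
        (Real.sqrt (ww n x) * (X x - c)) ^ 2 = ww n x * (X x - c) ^ 2 := by
      intro x
      rw [mul_pow, Real.sq_sqrt (ww_nonneg (n:=n) x)]
    have h3 : ∀ x : Fin (n+1) × Fin (n+1),
        (Real.sqrt (ww n x) * (Y x - d)) ^ 2 = ww n x * (Y x - d) ^ 2 := by
      intro x
      rw [mul_pow, Real.sq_sqrt (ww_nonneg (n:=n) x)]
    rw [Finset.sum_congr rfl (fun x _ => h1 x), Finset.sum_congr rfl (fun x _ => h2 x),
      Finset.sum_congr rfl (fun x _ => h3 x), hcov', hvx', hvy'] at h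
    exact h
  by_cases h0 : Real.sqrt (vx * vy) = 0
  · have hle : vx * vy ≤ 0 := by
      by_contra hgt
      push_neg at hgt
      exact (Real.sqrt_pos.2 hgt).ne' h0
    have : cov = 0 := by nlinarith [sq_nonneg cov]
    rw [this]
    simp
  · have hnn : 0 < vx * vy := by
      rcases lt_or_ge 0 (vx * vy) with h | h
      · exact h
      · exact absurd (Real.sqrt_eq_zero_of_nonpos h) h0
    have hs : 0 < Real.sqrt (vx * vy) := Real.sqrt_pos.2 hnn
    rw [abs_div, abs_of_nonneg (Real.sqrt_nonneg _), div_le_one hs]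
    have := Real.sqrt_le_sqrt hCS
    rw [Real.sqrt_sq_eq_abs] at this
    exact this

lemma eventCorr_bound {n : ℕ} (S T : Set (Fin (n+1))) :
    |eventCorr (Pm n) (Prod.fst ⁻¹' S) (Prod.snd ⁻¹' T)| ≤ 1764 * epsw n := by
  rw [eventCorr, Pm_inter, Pm_fst, Pm_snd]
  set a := ∑ k ∈ (Set.toFinite S).toFinset, pw n k with ha
  set b := ∑ k ∈ (Set.toFinite T).toFinset, pw n k with hb
  set u := ∑ k ∈ (Set.toFinite S).toFinset, pw n k * fw n k with hu
  set v := ∑ k ∈ (Set.toFinite T).toFinset, pw n k * fw n k with hv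
  have ha0 : 0 ≤ a := sum_pw_nonneg _
  have ha1 : a ≤ 1 := sum_pw_le_one _
  have hb0 : 0 ≤ b := sum_pw_nonneg _
  have hb1 : b ≤ 1 := sum_pw_le_one _
  have hau : |u| ≤ 42 * Real.sqrt (a * (1 - a)) := absF_main _
  have hav : |v| ≤ 42 * Real.sqrt (b * (1 - b)) := absF_main _
  have hnum : a * b + epsw n * (u * v) - a * b = epsw n * (u * v) := by ring
  rw [hnum]
  have hDsplit : Real.sqrt (a * (1 - a) * b * (1 - b))
      = Real.sqrt (a * (1 - a)) * Real.sqrt (b * (1 - b)) := by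
    rw [show a * (1 - a) * b * (1 - b) = (a * (1 - a)) * (b * (1 - b)) from by ring,
      Real.sqrt_mul (by nlinarith)]
  rw [hDsplit]
  set s1 := Real.sqrt (a * (1 - a)) with hs1
  set s2 := Real.sqrt (b * (1 - b)) with hs2
  have hs1n : 0 ≤ s1 := Real.sqrt_nonneg _
  have hs2n : 0 ≤ s2 := Real.sqrt_nonneg _
  have heps : 0 < epsw n := epsw_pos
  have hprod : |epsw n * (u * v)| ≤ 1764 * epsw n * (s1 * s2) := by
    rw [abs_mul, abs_mul, abs_of_pos heps]
    calc epsw n * (|u| * |v|) ≤ epsw n * ((42 * s1) * (42 * s2)) := by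
          apply mul_le_mul_of_nonneg_left _ heps.le
          exact mul_le_mul hau hav (abs_nonneg _) (by positivity)
      _ = 1764 * epsw n * (s1 * s2) := by ring
  rcases eq_or_lt_of_le (mul_nonneg hs1n hs2n) with h | h
  · rw [abs_div, ← h, abs_zero, div_zero]
    positivity
  · rw [abs_div, abs_of_pos h, div_le_iff₀ h]
    exact hprod

end Stmt14Aux

/-- Bradley–Bryc–Janson: ∃ universal A > 0 such that for every t ∈ [0,1] there is an
example with τ ≤ t and ρ ≥ A·t·(1 − log t). -/
theorem stmt14 : ∃ c : ℝ, 0 < c ∧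
    ∀ t ∈ Set.Icc (0:ℝ) 1,
      ∃ (Ω : Type) (mΩ : MeasurableSpace Ω) (P : Measure Ω),
        IsProbabilityMeasure P ∧
        ∃ 𝒜 ℬ : MeasurableSpace Ω, 𝒜 ≤ mΩ ∧ ℬ ≤ mΩ ∧
          tauDep P 𝒜 ℬ ≤ t ∧ rhoDep P 𝒜 ℬ ≥ c * (t * (1 - Real.log t)) := by
  classical
  refine ⟨(2⁻¹:ℝ)^64/200, by positivity, ?_⟩
  rintro t ⟨ht0, ht1⟩
  rcases eq_or_lt_of_le ht0 with rfl | htpos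
  · -- t = 0 : trivial example on Unit
    refine ⟨Unit, inferInstance, Measure.dirac (), inferInstance, ⊥, ⊥, bot_le, bot_le, ?_, ?_⟩
    · apply Real.sSup_le _ le_rfl
      rintro r ⟨A, B, _, _, rfl⟩
      have hA : (Measure.dirac () A).toReal = 0 ∨ (Measure.dirac () A).toReal = 1 := by
        rcases Set.eq_empty_or_nonempty A with rfl | hne
        · left; simp
        · right
          have : A = Set.univ := Set.eq_univ_of_forall fun y => by
            obtain ⟨x, hx⟩ := hne
            rwa [Subsingleton.elim y x]
          rw [this]
          simp
      have hD : (Measure.dirac () A).toReal * (1 - (Measure.dirac () A).toReal)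
          * (Measure.dirac () B).toReal * (1 - (Measure.dirac () B).toReal) = 0 := by
        rcases hA with h | h <;> rw [h] <;> ring
      rw [eventCorr, hD, Real.sqrt_zero, div_zero, abs_zero]
    · have hrhs : (2⁻¹:ℝ)^64/200 * (0 * (1 - Real.log 0)) = 0 := by ring
      rw [ge_iff_le, hrhs]
      apply le_csSup
      · refine ⟨1, ?_⟩
        rintro r ⟨X, Y, _, _, _, _, rfl⟩
        have hz : corrRV (Measure.dirac ()) X Y = 0 := by
          rw [corrRV]
          rw [integral_dirac (fun ω => X ω * Y ω) (), integral_dirac X (),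
            integral_dirac Y (), integral_dirac (fun ω => X ω ^ 2) (),
            integral_dirac (fun ω => Y ω ^ 2) ()]
          simp
        rw [hz]
        simp
      · refine ⟨fun _ => 0, fun _ => 0, measurable_const, measurable_const,
          MemLp.of_discrete, MemLp.of_discrete, ?_⟩
        rw [corrRV]
        simp
  · -- t > 0
    set m : ℕ := ⌈Real.logb 2 t⁻¹⌉₊ with hmdef
    set n : ℕ := 64 + m with hndef
    have htinv1 : (1:ℝ) ≤ t⁻¹ := by
      rw [le_inv_comm₀ one_pos htpos]
      simpa using ht1
    have hlogb0 : 0 ≤ Real.logb 2 t⁻¹ := Real.logb_nonneg one_lt_two htinv1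
    have h2m_ge : t⁻¹ ≤ (2:ℝ)^m := by
      have h1 : Real.logb 2 t⁻¹ ≤ (m:ℝ) := Nat.le_ceil _
      have h2 : (2:ℝ) ^ (Real.logb 2 t⁻¹) ≤ (2:ℝ) ^ (m:ℝ) :=
        Real.rpow_le_rpow_left_iff one_lt_two |>.mpr h1
      rwa [Real.rpow_logb (by norm_num) (by norm_num) (inv_pos.2 htpos),
        Real.rpow_natCast] at h2
    have hm1 : (2⁻¹:ℝ)^m ≤ t := by
      rw [inv_pow]
      rw [inv_le_comm₀ (by positivity) htpos]
      exact h2m_ge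
    have h2m_le : (2:ℝ)^m ≤ 2 * t⁻¹ := by
      have h1 : (m:ℝ) < Real.logb 2 t⁻¹ + 1 := Nat.ceil_lt_add_one hlogb0
      have h2 : (2:ℝ) ^ (m:ℝ) ≤ (2:ℝ) ^ (Real.logb 2 t⁻¹ + 1) :=
        Real.rpow_le_rpow_left_iff one_lt_two |>.mpr h1.le
      rwa [Real.rpow_add (by norm_num), Real.rpow_logb (by norm_num) (by norm_num)
        (inv_pos.2 htpos), Real.rpow_natCast, Real.rpow_one, mul_comm] at h2
    have hm2 : t ≤ 2 * (2⁻¹:ℝ)^m := by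
      rw [inv_pow]
      have h2mpos : (0:ℝ) < (2:ℝ)^m := by positivity
      rw [← div_eq_mul_inv, le_div_iff₀ h2mpos]
      have := mul_le_mul_of_nonneg_left h2m_le htpos.le
      have htt : t * t⁻¹ = 1 := mul_inv_cancel₀ htpos.ne'
      nlinarith
    have hm3 : -Real.log t ≤ (m:ℝ) := by
      have hlog2 : Real.log 2 ≤ 1 := by
        have := Real.add_one_le_exp (1:ℝ)
        have h2e : (2:ℝ) ≤ Real.exp 1 := by linarith
        calc Real.log 2 ≤ Real.log (Real.exp 1) :=
              Real.log_le_log (by norm_num) h2e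
          _ = 1 := Real.log_exp 1
      have hlog2pos : 0 < Real.log 2 := Real.log_pos one_lt_two
      have hloginv : 0 ≤ Real.log t⁻¹ := Real.log_nonneg htinv1
      have hlb : Real.log t⁻¹ ≤ Real.logb 2 t⁻¹ := by
        rw [Real.logb, le_div_iff₀ hlog2pos]
        nlinarith
      have := Nat.le_ceil (Real.logb 2 t⁻¹)
      rw [Real.log_inv] at hloginv hlb
      linarith
    refine ⟨Fin (n+1) × Fin (n+1), inferInstance, Stmt14Aux.Pm n, Stmt14Aux.Pm_prob,
      MeasurableSpace.comap Prod.fst ⊤, MeasurableSpace.comap Prod.snd ⊤,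
      fun s _ => MeasurableSet.of_discrete, fun s _ => MeasurableSet.of_discrete, ?_, ?_⟩
    · -- tau bound
      apply Real.sSup_le _ ht0
      rintro r ⟨A, B, hA, hB, rfl⟩
      obtain ⟨S, -, rfl⟩ := MeasurableSpace.measurableSet_comap.mp hA
      obtain ⟨T, -, rfl⟩ := MeasurableSpace.measurableSet_comap.mp hB
      calc |eventCorr (Stmt14Aux.Pm n) (Prod.fst ⁻¹' S) (Prod.snd ⁻¹' T)|
          ≤ 1764 * Stmt14Aux.epsw n := Stmt14Aux.eventCorr_bound S T
        _ ≤ t := by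
            rw [Stmt14Aux.epsw, hndef, pow_add]
            have hp64 : (0:ℝ) < (2⁻¹:ℝ)^64 := by positivity
            have hpm : (0:ℝ) ≤ (2⁻¹:ℝ)^m := by positivity
            have hsmall : 1764 * ((1:ℝ)/25) * (2⁻¹:ℝ)^64 ≤ 1 := by norm_num
            calc 1764 * (1/25 * ((2⁻¹:ℝ)^64 * (2⁻¹:ℝ)^m))
                = (1764 * (1/25) * (2⁻¹:ℝ)^64) * (2⁻¹:ℝ)^m := by ring
              _ ≤ 1 * (2⁻¹:ℝ)^m := mul_le_mul_of_nonneg_right hsmall hpm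
              _ = (2⁻¹:ℝ)^m := one_mul _
              _ ≤ t := hm1
    · -- rho bound
      have hn64 : (64:ℝ) ≤ (n:ℝ) := by
        rw [hndef]; push_cast; linarith [Nat.cast_nonneg (α := ℝ) m]
      have hnm : (m:ℝ) + 64 = (n:ℝ) := by rw [hndef]; push_cast; ring
      have hV4 : ((n:ℝ))/4 ≤ Stmt14Aux.Vw n := by
        have := Stmt14Aux.Vw_ge (n := n)
        linarith
      have hVpos : 0 < Stmt14Aux.Vw n := by linarith
      have hmem : Stmt14Aux.epsw n * Stmt14Aux.Vw n ∈
          {r : ℝ | ∃ X Y : Fin (n+1) × Fin (n+1) → ℝ,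
            Measurable[MeasurableSpace.comap Prod.fst ⊤] X ∧
            Measurable[MeasurableSpace.comap Prod.snd ⊤] Y ∧
            MemLp X 2 (Stmt14Aux.Pm n) ∧ MemLp Y 2 (Stmt14Aux.Pm n) ∧
            r = |corrRV (Stmt14Aux.Pm n) X Y|} := by
        refine ⟨fun x => Stmt14Aux.fw n x.1, fun x => Stmt14Aux.fw n x.2,
          fun s _ => ⟨Stmt14Aux.fw n ⁻¹' s, MeasurableSpace.measurableSet_top, rfl⟩,
          fun s _ => ⟨Stmt14Aux.fw n ⁻¹' s, MeasurableSpace.measurableSet_top, rfl⟩,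
          MemLp.of_discrete, MemLp.of_discrete, ?_⟩
        rw [Stmt14Aux.corr_fst_snd hVpos]
        rw [abs_of_nonneg (mul_nonneg Stmt14Aux.epsw_pos.le hVpos.le)]
      have hbdd : BddAbove {r : ℝ | ∃ X Y : Fin (n+1) × Fin (n+1) → ℝ,
            Measurable[MeasurableSpace.comap Prod.fst ⊤] X ∧
            Measurable[MeasurableSpace.comap Prod.snd ⊤] Y ∧
            MemLp X 2 (Stmt14Aux.Pm n) ∧ MemLp Y 2 (Stmt14Aux.Pm n) ∧
            r = |corrRV (Stmt14Aux.Pm n) X Y|} := by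
        refine ⟨1, ?_⟩
        rintro r ⟨X, Y, _, _, _, _, rfl⟩
        exact Stmt14Aux.corr_abs_le_one X Y
      have hle := le_csSup hbdd hmem
      rw [ge_iff_le, rhoDep]
      refine le_trans ?_ hle
      -- arithmetic: c * (t * (1 - log t)) ≤ epsw n * Vw n
      have hlogt : Real.log t ≤ 0 := Real.log_nonpos ht0 ht1
      have hfac : 1 - Real.log t ≤ (n:ℝ) := by
        rw [← hnm]
        linarith
      have hVlb : (1 - Real.log t)/4 ≤ Stmt14Aux.Vw n := by
        have : (1 - Real.log t)/4 ≤ (n:ℝ)/4 := by linarith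
        linarith
      have hepslb : (1/25) * ((2⁻¹:ℝ)^64 * (t/2)) ≤ Stmt14Aux.epsw n := by
        rw [Stmt14Aux.epsw, hndef, pow_add]
        have hp64 : (0:ℝ) ≤ (2⁻¹:ℝ)^64 := by positivity
        have ht2 : t/2 ≤ (2⁻¹:ℝ)^m := by linarith
        nlinarith
      have h1 : 0 ≤ (1 - Real.log t)/4 := by linarith
      have h2 : 0 ≤ (1/25) * ((2⁻¹:ℝ)^64 * (t/2)) := by positivity
      have hfin : ((1/25) * ((2⁻¹:ℝ)^64 * (t/2))) * ((1 - Real.log t)/4)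
          ≤ Stmt14Aux.epsw n * Stmt14Aux.Vw n :=
        mul_le_mul hepslb hVlb h1 (le_trans h2 hepslb |>.trans (le_refl _) |> fun _ => Stmt14Aux.epsw_pos.le)
      calc (2⁻¹:ℝ)^64/200 * (t * (1 - Real.log t))
          = ((1/25) * ((2⁻¹:ℝ)^64 * (t/2))) * ((1 - Real.log t)/4) := by ring
        _ ≤ Stmt14Aux.epsw n * Stmt14Aux.Vw n := hfin
end
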